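/- Let b : [0,∞) → (0,∞) be continuous such that the solution w of w'' + b·w = 0, w(0)=0, w'(0)=1 is monotone and bounded. Then ∫₀^∞ r·b(r) dr < ∞. -/

import Mathlib

open Real Set MeasureTheory

/-- If `b : [0,∞) → (0,∞)` is a continuous SL-bifurcator (the solution `w` of
`w'' + b w = 0`, `w 0 = 0`, `w' 0 = 1` is monotone and bounded), then
`∫₀^∞ r b(r) dr < ∞`. -/
theorem stmt_10 (b w : ℝ → ℝ)
    (hb_cont : ContinuousOn b (Set.Ici 0))
    (hb_pos : ∀ r : ℝ, 0 ≤ r → 0 < b r)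
    (hw : ContDiff ℝ 2 w)
    (hode : ∀ r : ℝ, 0 ≤ r → deriv (deriv w) r + b r * w r = 0)
    (h0 : w 0 = 0) (h0' : deriv w 0 = 1)
    (hmono : MonotoneOn w (Set.Ici 0))
    (hbdd : BddAbove (w '' Set.Ici 0)) :
    MeasureTheory.IntegrableOn (fun r : ℝ => r * b r) (Set.Ioi 0) := by
  have hwd : Differentiable ℝ w := hw.differentiable (by norm_num)
  have hwd' : Differentiable ℝ (deriv w) := by
    have h2 : ContDiff ℝ (1 + 1 : WithTop ℕ∞) w := by norm_num at hw ⊢; exact hw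
    exact ((contDiff_succ_iff_deriv.mp h2).2.2).differentiable one_ne_zero
  -- w nonneg on [0, ∞)
  have hwnn : ∀ r : ℝ, 0 ≤ r → 0 ≤ w r := fun r hr => by
    have := hmono (self_mem_Ici) hr hr
    simpa [h0] using this
  -- deriv w nonneg on [0, ∞)
  have hw'nn : ∀ R : ℝ, 0 ≤ R → 0 ≤ deriv w R := by
    intro R hR
    have hd : HasDerivAt w (deriv w R) R := (hwd R).hasDerivAt
    have hslope := hasDerivAt_iff_tendsto_slope.mp hd
    have hslope' : Filter.Tendsto (slope w R) (nhdsWithin R (Ioi R)) (nhds (deriv w R)) :=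
      hslope.mono_left (nhdsWithin_mono R (fun x hx => ne_of_gt hx))
    refine ge_of_tendsto hslope' ?_
    filter_upwards [self_mem_nhdsWithin] with x hx
    have hx' : R ≤ x := le_of_lt hx
    have : w R ≤ w x := hmono hR (le_trans hR hx') hx'
    have hxR : 0 < x - R := sub_pos.mpr hx
    rw [slope_def_field]
    exact div_nonneg (by linarith) (le_of_lt hxR)
  -- w 1 > 0
  have hw1 : 0 < w 1 := by
    rcases lt_or_eq_of_le (hwnn 1 zero_le_one) with h | h
    · exact h
    exfalso
    have hzero : ∀ x ∈ Icc (0:ℝ) 1, w x = 0 := by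
      intro x hx
      have h1 : w x ≤ w 1 := hmono hx.1 (mem_Ici.mpr zero_le_one) hx.2
      have h2 : 0 ≤ w x := hwnn x hx.1
      linarith
    have hU : UniqueDiffWithinAt ℝ (Icc (0:ℝ) 1) 0 :=
      (uniqueDiffOn_Icc one_pos) 0 ⟨le_refl 0, zero_le_one⟩
    have e1 : derivWithin w (Icc (0:ℝ) 1) 0 = deriv w 0 := (hwd 0).derivWithin hU
    have e2 : derivWithin w (Icc (0:ℝ) 1) 0 = derivWithin (fun _ => (0:ℝ)) (Icc (0:ℝ) 1) 0 := by
      apply derivWithin_congr hzero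
      exact hzero 0 ⟨le_refl 0, zero_le_one⟩
    rw [show (fun _ : ℝ => (0:ℝ)) = Function.const ℝ (0:ℝ) from rfl, derivWithin_const] at e2
    rw [h0', e2] at e1
    exact one_ne_zero e1.symm
  obtain ⟨M, hM⟩ := hbdd
  have hMb : ∀ r : ℝ, 0 ≤ r → w r ≤ M := fun r hr => hM ⟨r, hr, rfl⟩
  set f : ℝ → ℝ := fun r => r * b r * w r with hf
  have hfcont : ContinuousOn f (Ici 0) :=
    ((continuousOn_id.mul hb_cont).mul (hw.continuous.continuousOn))
  -- key integral identity / bound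
  have hkey : ∀ R : ℝ, 0 ≤ R → ∫ r in (0:ℝ)..R, f r = w R - R * deriv w R := by
    intro R hR
    have huIcc : uIcc (0:ℝ) R = Icc 0 R := uIcc_of_le hR
    have hderiv : ∀ r ∈ uIcc (0:ℝ) R,
        HasDerivAt (fun r => w r - r * deriv w r) (f r) r := by
      intro r hr
      rw [huIcc] at hr
      have h1 : HasDerivAt w (deriv w r) r := (hwd r).hasDerivAt
      have h2 : HasDerivAt (fun r => r * deriv w r)
          (1 * deriv w r + r * deriv (deriv w) r) r :=
        (hasDerivAt_id r).mul (hwd' r).hasDerivAt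
      have h3 : HasDerivAt (fun r => w r - r * deriv w r) _ r := h1.sub h2
      have hode' := hode r hr.1
      convert h3 using 1
      have : deriv (deriv w) r = -(b r * w r) := by linarith
      rw [this]; ring
    have hint : IntervalIntegrable f volume 0 R := by
      apply ContinuousOn.intervalIntegrable
      rw [huIcc]
      exact hfcont.mono (Icc_subset_Ici_self)
    have := intervalIntegral.integral_eq_sub_of_hasDerivAt hderiv hint
    rw [this, h0]
    ring
  have hbound : ∀ R : ℝ, 0 ≤ R → ∫ r in (0:ℝ)..R, ‖f r‖ ≤ M := by
    intro R hR
    have hnorm : ∀ r ∈ Icc (0:ℝ) R, ‖f r‖ = f r := by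
      intro r hr
      apply abs_of_nonneg
      exact mul_nonneg (mul_nonneg hr.1 (hb_pos r hr.1).le) (hwnn r hr.1)
    have : ∫ r in (0:ℝ)..R, ‖f r‖ = ∫ r in (0:ℝ)..R, f r := by
      apply intervalIntegral.integral_congr
      intro r hr
      rw [uIcc_of_le hR] at hr
      exact hnorm r hr
    rw [this, hkey R hR]
    have h1 : 0 ≤ R * deriv w R := mul_nonneg hR (hw'nn R hR)
    have h2 : w R ≤ M := hMb R hR
    linarith
  have hfi : ∀ i : ℝ, IntegrableOn f (Ioc 0 i) := by
    intro i
    rcases le_or_gt i 0 with hi | hi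
    · rw [Ioc_eq_empty (not_lt.mpr hi)]
      exact integrableOn_empty
    · exact ((hfcont.mono (Icc_subset_Ici_self)).integrableOn_Icc (a := 0) (b := i)).mono_set
        Ioc_subset_Icc_self
  have hfint : IntegrableOn f (Ioi 0) := by
    apply integrableOn_Ioi_of_intervalIntegral_norm_bounded M 0 hfi
      (Filter.tendsto_id (α := ℝ))
    filter_upwards [Filter.eventually_ge_atTop (0:ℝ)] with i hi
    exact hbound i hi
  -- split (0,∞) = (0,1] ∪ (1,∞)
  have hsplit : Ioi (0:ℝ) = Ioc 0 1 ∪ Ioi 1 := (Ioc_union_Ioi_eq_Ioi zero_le_one).symm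
  rw [hsplit]
  apply IntegrableOn.union
  · exact (((continuousOn_id.mul hb_cont).mono (Icc_subset_Ici_self)).integrableOn_Icc
      (a := 0) (b := 1)).mono_set Ioc_subset_Icc_self
  · -- on (1,∞), compare with (w 1)⁻¹ * f
    have hgint : IntegrableOn (fun r => (w 1)⁻¹ * f r) (Ioi 1) :=
      (hfint.mono_set (Ioi_subset_Ioi zero_le_one)).const_mul _
    apply Integrable.mono' hgint
    · exact ((continuousOn_id.mul hb_cont).mono
        (fun x (hx : x ∈ Ioi (1:ℝ)) => mem_Ici.mpr (le_of_lt (lt_of_le_of_lt zero_le_one hx)))).aestronglyMeasurable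
        measurableSet_Ioi
    · rw [ae_restrict_iff' measurableSet_Ioi]
      filter_upwards with r hr
      have hr0 : (0:ℝ) ≤ r := le_trans zero_le_one (le_of_lt hr)
      have hbr : 0 ≤ b r := (hb_pos r hr0).le
      have hrb : 0 ≤ r * b r := mul_nonneg hr0 hbr
      rw [Real.norm_eq_abs, abs_of_nonneg hrb]
      have hw1r : w 1 ≤ w r := hmono (mem_Ici.mpr zero_le_one) hr0 (le_of_lt hr)
      have : r * b r * w 1 ≤ f r := by
        simp only [hf]
        exact mul_le_mul_of_nonneg_left hw1r hrb
      rw [show (w 1)⁻¹ * f r = f r / w 1 from (div_eq_inv_mul _ _).symm, le_div_iff₀ hw1]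
      linarith
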